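/- Let (Θ, Θ̄) be a twist for a weak Hopf algebra H over a field k. Then the element v = S(Θ⁽¹⁾)Θ⁽²⁾ is invertible in H with inverse Θ̄⁽¹⁾S(Θ̄⁽²⁾); that is, Θ̄⁽¹⁾S(Θ̄⁽²⁾)·S(Θ⁽¹⁾)Θ⁽²⁾ = 1 and S(Θ⁽¹⁾)Θ⁽²⁾·Θ̄⁽¹⁾S(Θ̄⁽²⁾) = 1. -/

import Mathlib

open TensorProduct

noncomputable section

namespace WHA

variable (k B : Type*) [Field k] [Ring B] [Algebra k B]

/-- `x ↦ x ⊗ 1`, the embedding of `B ⊗ B` into legs 1,2 of `B ⊗ B ⊗ B`. -/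
def leg12 : B ⊗[k] B →ₗ[k] B ⊗[k] (B ⊗[k] B) :=
  (TensorProduct.assoc k B B B).toLinearMap ∘ₗ (TensorProduct.mk k (B ⊗[k] B) B).flip 1

/-- `x ↦ 1 ⊗ x`, the embedding of `B ⊗ B` into legs 2,3 of `B ⊗ B ⊗ B`. -/
def leg23 : B ⊗[k] B →ₗ[k] B ⊗[k] (B ⊗[k] B) :=
  TensorProduct.mk k B (B ⊗[k] B) 1

/-- `a ⊗ b ↦ a ⊗ 1 ⊗ b`, the embedding of `B ⊗ B` into legs 1,3 of `B ⊗ B ⊗ B`. -/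
def leg13 : B ⊗[k] B →ₗ[k] B ⊗[k] (B ⊗[k] B) :=
  TensorProduct.map LinearMap.id (TensorProduct.mk k B B 1)

/-- `Δ ⊗ id`, landing in the right-associated triple tensor product. -/
def ext12 (Δ : B →ₗ[k] B ⊗[k] B) : B ⊗[k] B →ₗ[k] B ⊗[k] (B ⊗[k] B) :=
  (TensorProduct.assoc k B B B).toLinearMap ∘ₗ TensorProduct.map Δ LinearMap.id

/-- `id ⊗ Δ`. -/
def ext23 (Δ : B →ₗ[k] B ⊗[k] B) : B ⊗[k] B →ₗ[k] B ⊗[k] (B ⊗[k] B) :=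
  TensorProduct.map LinearMap.id Δ

/-- `(ε ⊗ id)` composed with the canonical isomorphism `k ⊗ B ≅ B`. -/
def epsL (ε : B →ₗ[k] k) : B ⊗[k] B →ₗ[k] B :=
  (TensorProduct.lid k B).toLinearMap ∘ₗ TensorProduct.map ε LinearMap.id

/-- `(id ⊗ ε)` composed with the canonical isomorphism `B ⊗ k ≅ B`. -/
def epsR (ε : B →ₗ[k] k) : B ⊗[k] B →ₗ[k] B :=
  (TensorProduct.rid k B).toLinearMap ∘ₗ TensorProduct.map LinearMap.id ε

/-- Pairing of two linear functionals against an element of `B ⊗ B`. -/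
def pairF (φ ψ : B →ₗ[k] k) : B ⊗[k] B →ₗ[k] k :=
  (TensorProduct.lid k k).toLinearMap ∘ₗ TensorProduct.map φ ψ

/-- The multiplication map `B ⊗ B → B`. -/
def mul2 : B ⊗[k] B →ₗ[k] B := LinearMap.mul' k B

/-- A weak Hopf algebra structure on the `k`-algebra `B`. -/
structure WeakHopf where
  Δ : B →ₗ[k] B ⊗[k] B
  ε : B →ₗ[k] k
  S : B →ₗ[k] B
  comul_mul : ∀ g h : B, Δ (g * h) = Δ g * Δ h
  coassoc : ∀ h : B, ext12 k B Δ (Δ h) = ext23 k B Δ (Δ h)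
  counit_left : ∀ h : B, epsL k B ε (Δ h) = h
  counit_right : ∀ h : B, epsR k B ε (Δ h) = h
  eps_weak₁ : ∀ g h f : B, ε (g * h * f) =
    pairF k B (ε ∘ₗ LinearMap.mulLeft k g) (ε ∘ₗ LinearMap.mulRight k f) (Δ h)
  eps_weak₂ : ∀ g h f : B, ε (g * h * f) =
    pairF k B (ε ∘ₗ LinearMap.mulRight k f) (ε ∘ₗ LinearMap.mulLeft k g) (Δ h)
  delta_one₁ : ext12 k B Δ (Δ 1) = leg12 k B (Δ 1) * leg23 k B (Δ 1)
  delta_one₂ : ext12 k B Δ (Δ 1) = leg23 k B (Δ 1) * leg12 k B (Δ 1)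
  antipode₁ : ∀ h : B,
    mul2 k B (TensorProduct.map LinearMap.id S (Δ h)) = epsL k B ε (Δ 1 * (h ⊗ₜ[k] 1))
  antipode₂ : ∀ h : B,
    mul2 k B (TensorProduct.map S LinearMap.id (Δ h)) = epsR k B ε (((1 : B) ⊗ₜ[k] h) * Δ 1)
  antipode₃ : ∀ h : B,
    mul2 k B (TensorProduct.map S (mul2 k B ∘ₗ TensorProduct.map LinearMap.id S)
      (ext23 k B Δ (Δ h))) = S h

variable {k B}

/-- The target counital map `ε_t`. -/
def WeakHopf.εt (W : WeakHopf k B) : B →ₗ[k] B :=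
  epsL k B W.ε ∘ₗ LinearMap.mulLeft k (W.Δ 1) ∘ₗ (TensorProduct.mk k B B).flip 1

/-- The source counital map `ε_s`. -/
def WeakHopf.εs (W : WeakHopf k B) : B →ₗ[k] B :=
  epsR k B W.ε ∘ₗ LinearMap.mulRight k (W.Δ 1) ∘ₗ TensorProduct.mk k B B 1

variable (k B)

/-- A twist for a weak Hopf algebra. -/
structure Twist (W : WeakHopf k B) where
  Θ : B ⊗[k] B
  Θbar : B ⊗[k] B
  idem_left : Θ = W.Δ 1 * Θ
  idem_right : Θbar = Θbar * W.Δ 1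
  prod_eq : Θ * Θbar = W.Δ 1
  counit₁ : epsL k B W.ε Θ = 1
  counit₂ : epsR k B W.ε Θ = 1
  counit₃ : epsL k B W.ε Θbar = 1
  counit₄ : epsR k B W.ε Θbar = 1
  cocycle₁ : ext12 k B W.Δ Θ * leg12 k B Θ = ext23 k B W.Δ Θ * leg23 k B Θ
  cocycle₂ : leg12 k B Θbar * ext12 k B W.Δ Θbar = leg23 k B Θbar * ext23 k B W.Δ Θbar
  cocycle₃ : ext12 k B W.Δ Θbar * ext23 k B W.Δ Θ = leg12 k B Θ * leg23 k B Θbar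
  cocycle₄ : ext23 k B W.Δ Θbar * ext12 k B W.Δ Θ = leg23 k B Θ * leg12 k B Θbar

end WHA

namespace WHA
set_option synthInstance.maxHeartbeats 1000000
set_option maxHeartbeats 1600000

variable {k B : Type*} [Field k] [Ring B] [Algebra k B]

@[simp] lemma mul2_tmul (x y : B) : mul2 k B (x ⊗ₜ[k] y) = x * y := rfl
@[simp] lemma leg12_tmul (x y : B) : leg12 k B (x ⊗ₜ[k] y) = x ⊗ₜ[k] (y ⊗ₜ[k] 1) := rfl
@[simp] lemma leg23_apply (t : B ⊗[k] B) : leg23 k B t = (1:B) ⊗ₜ[k] t := rfl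
@[simp] lemma leg13_tmul (x y : B) : leg13 k B (x ⊗ₜ[k] y) = x ⊗ₜ[k] ((1:B) ⊗ₜ[k] y) := rfl
@[simp] lemma ext12_tmul (Δ : B →ₗ[k] B ⊗[k] B) (x y : B) :
    ext12 k B Δ (x ⊗ₜ[k] y) = (TensorProduct.assoc k B B B) (Δ x ⊗ₜ[k] y) := rfl
@[simp] lemma ext23_tmul (Δ : B →ₗ[k] B ⊗[k] B) (x y : B) :
    ext23 k B Δ (x ⊗ₜ[k] y) = x ⊗ₜ[k] Δ y := rfl
@[simp] lemma epsL_tmul (ε : B →ₗ[k] k) (x y : B) : epsL k B ε (x ⊗ₜ[k] y) = ε x • y := rfl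
@[simp] lemma epsR_tmul (ε : B →ₗ[k] k) (x y : B) : epsR k B ε (x ⊗ₜ[k] y) = ε y • x := rfl
@[simp] lemma pairF_tmul (φ ψ : B →ₗ[k] k) (x y : B) :
    pairF k B φ ψ (x ⊗ₜ[k] y) = φ x * ψ y := by
  simp [pairF, smul_eq_mul]

lemma leg12_mul (u v : B ⊗[k] B) :
    leg12 k B (u * v) = leg12 k B u * leg12 k B v := by
  induction u using TensorProduct.induction_on with
  | zero => simp
  | add a b ha hb => simp [add_mul, ha, hb]
  | tmul x y =>
    induction v using TensorProduct.induction_on with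
    | zero => simp
    | add a b ha hb => simp [mul_add, ha, hb]
    | tmul z w => simp

lemma leg23_mul (u v : B ⊗[k] B) :
    leg23 k B (u * v) = leg23 k B u * leg23 k B v := by simp

lemma assoc_mul_tmul (u v : B ⊗[k] B) (y w : B) :
    (TensorProduct.assoc k B B B) ((u * v) ⊗ₜ[k] (y * w)) =
      (TensorProduct.assoc k B B B) (u ⊗ₜ[k] y) * (TensorProduct.assoc k B B B) (v ⊗ₜ[k] w) := by
  induction u using TensorProduct.induction_on with
  | zero => simp
  | add a b ha hb => simp [add_mul, add_tmul, ha, hb]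
  | tmul p q =>
    induction v using TensorProduct.induction_on with
    | zero => simp
    | add a b ha hb => simp [mul_add, add_tmul, ha, hb]
    | tmul r s => simp [mul_assoc]

lemma ext12_mul (W : WeakHopf k B) (u v : B ⊗[k] B) :
    ext12 k B W.Δ (u * v) = ext12 k B W.Δ u * ext12 k B W.Δ v := by
  induction u using TensorProduct.induction_on with
  | zero => simp
  | add a b ha hb => simp [add_mul, ha, hb]
  | tmul x y =>
    induction v using TensorProduct.induction_on with
    | zero => simp
    | add a b ha hb => simp [mul_add, ha, hb]
    | tmul z w =>
      simp only [ext12_tmul, Algebra.TensorProduct.tmul_mul_tmul, W.comul_mul, assoc_mul_tmul]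

lemma ext23_mul (W : WeakHopf k B) (u v : B ⊗[k] B) :
    ext23 k B W.Δ (u * v) = ext23 k B W.Δ u * ext23 k B W.Δ v := by
  induction u using TensorProduct.induction_on with
  | zero => simp
  | add a b ha hb => simp [add_mul, ha, hb]
  | tmul x y =>
    induction v using TensorProduct.induction_on with
    | zero => simp
    | add a b ha hb => simp [mul_add, ha, hb]
    | tmul z w => simp [W.comul_mul]

end WHA

namespace WHA
section Dev
set_option synthInstance.maxHeartbeats 1000000
set_option maxHeartbeats 1600000
variable {k B : Type*} [Field k] [Ring B] [Algebra k B] (W : WeakHopf k B)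

lemma Δ_one_mul (x : B) : W.Δ 1 * W.Δ x = W.Δ x := by
  rw [← W.comul_mul, one_mul]
lemma Δ_mul_one (x : B) : W.Δ x * W.Δ 1 = W.Δ x := by
  rw [← W.comul_mul, mul_one]

lemma εt_def (x : B) : W.εt x = epsL k B W.ε (W.Δ 1 * (x ⊗ₜ[k] 1)) := rfl
lemma εs_def (x : B) : W.εs x = epsR k B W.ε (((1:B) ⊗ₜ[k] x) * W.Δ 1) := rfl

lemma eps_t_eq (h : B) :
    mul2 k B (TensorProduct.map LinearMap.id W.S (W.Δ h)) = W.εt h := W.antipode₁ h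
lemma eps_s_eq (h : B) :
    mul2 k B (TensorProduct.map W.S LinearMap.id (W.Δ h)) = W.εs h := W.antipode₂ h

/-- `ε_t x` as a contraction of `Δ1` against the functional `ε(· x)`. -/
lemma mini1 (x : B) (t : B ⊗[k] B) :
    epsL k B W.ε (t * (x ⊗ₜ[k] 1)) = epsL k B (W.ε ∘ₗ LinearMap.mulRight k x) t := by
  induction t using TensorProduct.induction_on with
  | zero => simp
  | add a b ha hb => simp [add_mul, ha, hb]
  | tmul a b => simp

lemma mini2 (y : B) (t : B ⊗[k] B) :
    epsR k B W.ε (((1:B) ⊗ₜ[k] y) * t) = epsR k B (W.ε ∘ₗ LinearMap.mulLeft k y) t := by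
  induction t using TensorProduct.induction_on with
  | zero => simp
  | add a b ha hb => simp [mul_add, ha, hb]
  | tmul a b => simp

lemma εt_one : W.εt 1 = 1 := by
  have : ((1:B) ⊗ₜ[k] (1:B)) = (1 : B ⊗[k] B) := rfl
  rw [εt_def, this, mul_one, W.counit_left]
lemma εs_one : W.εs 1 = 1 := by
  have : ((1:B) ⊗ₜ[k] (1:B)) = (1 : B ⊗[k] B) := rfl
  rw [εs_def, this, one_mul, W.counit_right]

/-- ε(a · ε_t h) = ε(a h). -/
lemma lemG (a h : B) : W.ε (a * W.εt h) = W.ε (a * h) := by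
  have key : ∀ t : B ⊗[k] B,
      W.ε (a * epsL k B W.ε (t * (h ⊗ₜ[k] 1)))
        = pairF k B (W.ε ∘ₗ LinearMap.mulRight k h) (W.ε ∘ₗ LinearMap.mulLeft k a) t := by
    intro t
    induction t using TensorProduct.induction_on with
    | zero => simp
    | add u v hu hv => simp [add_mul, hu, hv, mul_add]
    | tmul x y => simp [mul_smul_comm, mul_comm]
  have h2 := W.eps_weak₂ a 1 h
  rw [mul_one] at h2
  rw [εt_def, key (W.Δ 1), ← h2]

/-- ε(ε_s h · a) = ε(h a). -/
lemma lemG' (h a : B) : W.ε (W.εs h * a) = W.ε (h * a) := by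
  have key : ∀ t : B ⊗[k] B,
      W.ε (epsR k B W.ε (((1:B) ⊗ₜ[k] h) * t) * a)
        = pairF k B (W.ε ∘ₗ LinearMap.mulRight k a) (W.ε ∘ₗ LinearMap.mulLeft k h) t := by
    intro t
    induction t using TensorProduct.induction_on with
    | zero => simp
    | add u v hu hv => simp [mul_add, hu, hv, add_mul]
    | tmul x y => simp [smul_mul_assoc, mul_comm]
  have h2 := W.eps_weak₂ h 1 a
  rw [mul_one] at h2
  rw [εs_def, key (W.Δ 1), ← h2]

lemma lemM (g h : B) : W.εt (g * W.εt h) = W.εt (g * h) := by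
  have main : ∀ t : B ⊗[k] B,
      epsL k B W.ε (t * ((g * W.εt h) ⊗ₜ[k] 1)) = epsL k B W.ε (t * ((g * h) ⊗ₜ[k] 1)) := by
    intro t
    induction t using TensorProduct.induction_on with
    | zero => simp
    | add u v hu hv => simp [add_mul, hu, hv]
    | tmul x y =>
      simp only [Algebra.TensorProduct.tmul_mul_tmul, mul_one, epsL_tmul]
      rw [← mul_assoc, lemG W (x*g) h, mul_assoc]
  rw [εt_def W (g * W.εt h), main (W.Δ 1), ← εt_def]

lemma lemM' (h g : B) : W.εs (W.εs h * g) = W.εs (h * g) := by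
  have main : ∀ t : B ⊗[k] B,
      epsR k B W.ε (((1:B) ⊗ₜ[k] (W.εs h * g)) * t) = epsR k B W.ε (((1:B) ⊗ₜ[k] (h * g)) * t) := by
    intro t
    induction t using TensorProduct.induction_on with
    | zero => simp
    | add u v hu hv => simp [mul_add, hu, hv]
    | tmul x y =>
      simp only [Algebra.TensorProduct.tmul_mul_tmul, one_mul, epsR_tmul]
      rw [mul_assoc, lemG' W h (g*y), ← mul_assoc]
  rw [εs_def W (W.εs h * g), main (W.Δ 1), ← εs_def]

/-- Auxiliary contraction used for `Δ ∘ ε_t`. -/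
lemma N_form1 (h : B) : W.Δ (W.εt h) = W.Δ 1 * (W.εt h ⊗ₜ[k] 1) := by
  set κ : B ⊗[k] (B ⊗[k] B) →ₗ[k] B ⊗[k] B :=
    (TensorProduct.lid k (B ⊗[k] B)).toLinearMap ∘ₗ
      TensorProduct.map (W.ε ∘ₗ LinearMap.mulRight k h) LinearMap.id with hκ
  have κ_tmul : ∀ (a : B) (p : B ⊗[k] B), κ (a ⊗ₜ[k] p) = W.ε (a * h) • p := by
    intro a p; simp [hκ]
  have Na : ∀ t : B ⊗[k] B,
      W.Δ (epsL k B W.ε (t * (h ⊗ₜ[k] 1))) = κ (ext23 k B W.Δ t) := by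
    intro t
    induction t using TensorProduct.induction_on with
    | zero => simp
    | add u v hu hv => simp [add_mul, hu, hv]
    | tmul x y => simp [κ_tmul]
  have Nb : ∀ (u t : B ⊗[k] B),
      κ (leg23 k B u * leg12 k B t)
        = u * (epsL k B (W.ε ∘ₗ LinearMap.mulRight k h) t ⊗ₜ[k] 1) := by
    intro u t
    induction t using TensorProduct.induction_on with
    | zero => simp
    | add a b ha hb => simp only [map_add, mul_add, add_tmul, ha, hb]
    | tmul x y =>
      simp only [leg12_tmul, leg23_apply, Algebra.TensorProduct.tmul_mul_tmul, one_mul,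
        κ_tmul, epsL_tmul, LinearMap.comp_apply, LinearMap.mulRight_apply]
      rw [← smul_tmul', mul_smul_comm]
  rw [εt_def, Na (W.Δ 1), ← W.coassoc 1, W.delta_one₂, Nb, ← mini1, ← εt_def]

lemma N'_form (h : B) : W.Δ (W.εs h) = ((1:B) ⊗ₜ[k] W.εs h) * W.Δ 1 := by
  set lam : B ⊗[k] (B ⊗[k] B) →ₗ[k] B ⊗[k] B :=
    TensorProduct.map LinearMap.id (epsR k B (W.ε ∘ₗ LinearMap.mulLeft k h)) with hlam
  have lam_tmul : ∀ (a : B) (p q : B), lam (a ⊗ₜ[k] (p ⊗ₜ[k] q)) = W.ε (h * q) • (a ⊗ₜ[k] p) := by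
    intro a p q; simp [hlam, tmul_smul]
  have SLa : ∀ (p : B ⊗[k] B) (y : B),
      lam ((TensorProduct.assoc k B B B) (p ⊗ₜ[k] y)) = W.ε (h * y) • p := by
    intro p y
    induction p using TensorProduct.induction_on with
    | zero => simp
    | add a b ha hb => simp only [add_tmul, map_add, ha, hb, smul_add]
    | tmul a b => simp [lam_tmul]
  have Na : ∀ t : B ⊗[k] B,
      W.Δ (epsR k B W.ε (((1:B) ⊗ₜ[k] h) * t)) = lam (ext12 k B W.Δ t) := by
    intro t
    induction t using TensorProduct.induction_on with
    | zero => simp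
    | add u v hu hv => simp [mul_add, hu, hv]
    | tmul x y => simp [SLa]
  have SLb : ∀ (u : B ⊗[k] B) (y : B),
      epsR k B (W.ε ∘ₗ LinearMap.mulLeft k h) (u * (y ⊗ₜ[k] 1))
        = epsR k B (W.ε ∘ₗ LinearMap.mulLeft k h) u * y := by
    intro u y
    induction u using TensorProduct.induction_on with
    | zero => simp
    | add a b ha hb => simp [add_mul, ha, hb]
    | tmul c d => simp [smul_mul_assoc]
  have Nb : ∀ (u t : B ⊗[k] B),
      lam (leg23 k B u * leg12 k B t)
        = ((1:B) ⊗ₜ[k] epsR k B (W.ε ∘ₗ LinearMap.mulLeft k h) u) * t := by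
    intro u t
    induction t using TensorProduct.induction_on with
    | zero => simp
    | add a b ha hb => simp only [map_add, mul_add, ha, hb]
    | tmul x y =>
      simp only [leg12_tmul, leg23_apply, Algebra.TensorProduct.tmul_mul_tmul, one_mul, hlam,
        TensorProduct.map_tmul, LinearMap.id_coe, id_eq, SLb]
  rw [εs_def, Na (W.Δ 1), W.delta_one₂, Nb, ← mini2, ← εs_def]

lemma lemJ (g h : B) :
    mul2 k B (TensorProduct.map LinearMap.id W.S (W.Δ g * (W.εt h ⊗ₜ[k] 1))) = W.εt (g * h) := by
  rw [← lemM W g h, ← eps_t_eq W (g * W.εt h), W.comul_mul, N_form1, ← mul_assoc, Δ_mul_one]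

lemma lemJ' (h g : B) :
    mul2 k B (TensorProduct.map W.S LinearMap.id (((1:B) ⊗ₜ[k] W.εs h) * W.Δ g)) = W.εs (h * g) := by
  rw [← lemM' W h g, ← eps_s_eq W (W.εs h * g), W.comul_mul, N'_form, mul_assoc, Δ_one_mul]

lemma lemK (h : B) : mul2 k B (TensorProduct.map W.S W.εt (W.Δ h)) = W.S h := by
  have pre : ∀ t : B ⊗[k] B,
      TensorProduct.map W.S (mul2 k B ∘ₗ TensorProduct.map LinearMap.id W.S) (ext23 k B W.Δ t)
        = TensorProduct.map W.S W.εt t := by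
    intro t
    induction t using TensorProduct.induction_on with
    | zero => simp
    | add a b ha hb => simp [ha, hb]
    | tmul x y => simp [eps_t_eq]
  have := W.antipode₃ h
  rwa [pre (W.Δ h)] at this

lemma lemL (h : B) : mul2 k B (TensorProduct.map W.εs W.S (W.Δ h)) = W.S h := by
  have SL : ∀ (p : B ⊗[k] B) (c : B),
      mul2 k B (TensorProduct.map W.S (mul2 k B ∘ₗ TensorProduct.map LinearMap.id W.S)
        ((TensorProduct.assoc k B B B) (p ⊗ₜ[k] c)))
        = mul2 k B (TensorProduct.map W.S LinearMap.id p) * W.S c := by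
    intro p c
    induction p using TensorProduct.induction_on with
    | zero => simp
    | add a b ha hb => simp [add_tmul, ha, hb, add_mul]
    | tmul a b => simp [mul_assoc]
  have pre : ∀ t : B ⊗[k] B,
      mul2 k B (TensorProduct.map W.S (mul2 k B ∘ₗ TensorProduct.map LinearMap.id W.S)
        (ext12 k B W.Δ t)) = mul2 k B (TensorProduct.map W.εs W.S t) := by
    intro t
    induction t using TensorProduct.induction_on with
    | zero => simp
    | add a b ha hb => simp [ha, hb]
    | tmul x y => simp only [ext12_tmul, SL, eps_s_eq, TensorProduct.map_tmul, mul2_tmul]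
  have := W.antipode₃ h
  rwa [← W.coassoc h, pre (W.Δ h)] at this

lemma map_map_apply (f f' : B →ₗ[k] B) (g g' : B →ₗ[k] B) (t : B ⊗[k] B) :
    TensorProduct.map f g (TensorProduct.map f' g' t) = TensorProduct.map (f ∘ₗ f') (g ∘ₗ g') t := by
  induction t using TensorProduct.induction_on with
  | zero => simp
  | add a b ha hb => simp [ha, hb]
  | tmul x y => simp

lemma leg12_apply (t : B ⊗[k] B) :
    leg12 k B t = (TensorProduct.assoc k B B B) (t ⊗ₜ[k] 1) := rfl

lemma lemF (h : B) :
    TensorProduct.map LinearMap.id W.εt (W.Δ h) = W.Δ 1 * (h ⊗ₜ[k] 1) := by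
  have Fa : ∀ t : B ⊗[k] B,
      TensorProduct.map LinearMap.id W.εt t
        = TensorProduct.map LinearMap.id (epsL k B W.ε) (leg23 k B (W.Δ 1) * leg12 k B t) := by
    intro t
    induction t using TensorProduct.induction_on with
    | zero => simp
    | add a b ha hb => simp [mul_add, ha, hb]
    | tmul x y =>
      simp only [leg12_tmul, leg23_apply, Algebra.TensorProduct.tmul_mul_tmul, one_mul,
        TensorProduct.map_tmul, LinearMap.id_coe, id_eq, εt_def]
  have Fb : leg23 k B (W.Δ 1) * leg12 k B (W.Δ h) = ext12 k B W.Δ (W.Δ 1 * (h ⊗ₜ[k] 1)) := by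
    have e1 : ext12 k B W.Δ (h ⊗ₜ[k] 1) = leg12 k B (W.Δ h) := rfl
    rw [ext12_mul, e1, W.delta_one₂, mul_assoc, ← leg12_mul, Δ_one_mul]
  have Fc : ∀ t : B ⊗[k] B,
      TensorProduct.map LinearMap.id (epsL k B W.ε) (ext12 k B W.Δ t) = t := by
    have SL : ∀ (p : B ⊗[k] B) (v : B),
        TensorProduct.map LinearMap.id (epsL k B W.ε) ((TensorProduct.assoc k B B B) (p ⊗ₜ[k] v))
          = epsR k B W.ε p ⊗ₜ[k] v := by
      intro p v
      induction p using TensorProduct.induction_on with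
      | zero => simp
      | add a b ha hb => simp [add_tmul, ha, hb]
      | tmul x y => simp [tmul_smul, smul_tmul']
    intro t
    induction t using TensorProduct.induction_on with
    | zero => simp
    | add a b ha hb => simp [ha, hb]
    | tmul x y => simp [SL, W.counit_right]
  rw [Fa, Fb, Fc]

lemma lemF' (h : B) :
    TensorProduct.map W.εs LinearMap.id (W.Δ h) = ((1:B) ⊗ₜ[k] h) * W.Δ 1 := by
  set Φ : B ⊗[k] (B ⊗[k] B) →ₗ[k] B ⊗[k] B :=
    TensorProduct.map (epsR k B W.ε) LinearMap.id ∘ₗ (TensorProduct.assoc k B B B).symm.toLinearMap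
    with hΦ
  have Φ_tmul : ∀ (a b c : B), Φ (a ⊗ₜ[k] (b ⊗ₜ[k] c)) = (W.ε b • a) ⊗ₜ[k] c := by
    intro a b c; simp [hΦ]
  have Fa : ∀ t : B ⊗[k] B,
      TensorProduct.map W.εs LinearMap.id t = Φ (leg23 k B t * leg12 k B (W.Δ 1)) := by
    intro t
    induction t using TensorProduct.induction_on with
    | zero => simp
    | add a b ha hb => simp [tmul_add, add_mul, ha, hb]
    | tmul x y =>
      have SL : ∀ u : B ⊗[k] B,
          Φ (((1:B) ⊗ₜ[k] (x ⊗ₜ[k] y)) * leg12 k B u)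
            = epsR k B (W.ε ∘ₗ LinearMap.mulLeft k x) u ⊗ₜ[k] y := by
        intro u
        induction u using TensorProduct.induction_on with
        | zero => simp
        | add a b ha hb => simp [map_add, mul_add, ha, hb, add_tmul]
        | tmul a b => simp [Φ_tmul, smul_tmul']
      simp only [leg23_apply, SL]
      rw [← mini2, ← εs_def]
      simp
  have Fb : leg23 k B (W.Δ h) * leg12 k B (W.Δ 1) = ext23 k B W.Δ (((1:B) ⊗ₜ[k] h) * W.Δ 1) := by
    have e1 : ext23 k B W.Δ ((1:B) ⊗ₜ[k] h) = leg23 k B (W.Δ h) := rfl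
    rw [ext23_mul, e1, ← W.coassoc 1, W.delta_one₂, ← mul_assoc, ← leg23_mul, Δ_mul_one]
  have Fc : ∀ t : B ⊗[k] B, Φ (ext23 k B W.Δ t) = t := by
    have SL : ∀ (x : B) (p : B ⊗[k] B), Φ (x ⊗ₜ[k] p) = x ⊗ₜ[k] epsL k B W.ε p := by
      intro x p
      induction p using TensorProduct.induction_on with
      | zero => simp
      | add a b ha hb => simp [tmul_add, ha, hb]
      | tmul a b => rw [Φ_tmul]; simp [smul_tmul', tmul_smul]
    intro t
    induction t using TensorProduct.induction_on with
    | zero => simp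
    | add a b ha hb => simp [ha, hb]
    | tmul x y => simp [SL, W.counit_left]
  rw [Fa, Fb, Fc]

lemma lemR (h : B) :
    mul2 k B (TensorProduct.map LinearMap.id W.S (((1:B) ⊗ₜ[k] h) * W.Δ 1)) = W.S h := by
  rw [← lemF', map_map_apply]
  simp only [LinearMap.comp_id, LinearMap.id_comp]
  exact lemL W h

lemma lemR' (h : B) :
    mul2 k B (TensorProduct.map W.S LinearMap.id (W.Δ 1 * (h ⊗ₜ[k] 1))) = W.S h := by
  rw [← lemF, map_map_apply]
  simp only [LinearMap.comp_id, LinearMap.id_comp]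
  exact lemK W h

lemma S_one : W.S 1 = 1 := by
  have := lemR' W 1
  rw [show ((1:B) ⊗ₜ[k] (1:B)) = (1 : B ⊗[k] B) from rfl, mul_one] at this
  rw [← this, eps_s_eq, εs_one]

lemma lemCOMM (x y : B) : W.εt x * W.εs y = W.εs y * W.εt x := by
  set CM : B ⊗[k] (B ⊗[k] B) →ₗ[k] B :=
    (TensorProduct.lid k B).toLinearMap ∘ₗ
      TensorProduct.map (W.ε ∘ₗ LinearMap.mulRight k x)
        (epsR k B (W.ε ∘ₗ LinearMap.mulLeft k y)) with hCM
  have CM_tmul : ∀ (a b c : B), CM (a ⊗ₜ[k] (b ⊗ₜ[k] c)) = W.ε (a*x) • (W.ε (y*c) • b) := by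
    intro a b c
    simp only [hCM, LinearMap.comp_apply, TensorProduct.map_tmul, LinearEquiv.coe_coe,
      TensorProduct.lid_tmul, epsR_tmul, LinearMap.mulRight_apply, LinearMap.mulLeft_apply,
      smul_smul]
    try rw [mul_comm]
  have Ca : ∀ t u : B ⊗[k] B,
      CM (leg12 k B t * ((1:B) ⊗ₜ[k] u))
        = epsL k B (W.ε ∘ₗ LinearMap.mulRight k x) t * epsR k B (W.ε ∘ₗ LinearMap.mulLeft k y) u := by
    intro t u
    induction t using TensorProduct.induction_on with
    | zero => simp
    | add a b ha hb => simp [add_mul, ha, hb]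
    | tmul a b =>
      induction u using TensorProduct.induction_on with
      | zero => simp
      | add p q hp hq => simp only [tmul_add, mul_add, map_add, hp, hq]
      | tmul c d =>
        simp [CM_tmul, smul_mul_assoc, mul_smul_comm, smul_smul, mul_comm (W.ε (a*x))]
  have Cb : ∀ u t : B ⊗[k] B,
      CM (((1:B) ⊗ₜ[k] u) * leg12 k B t)
        = epsR k B (W.ε ∘ₗ LinearMap.mulLeft k y) u * epsL k B (W.ε ∘ₗ LinearMap.mulRight k x) t := by
    intro u t
    induction t using TensorProduct.induction_on with
    | zero => simp
    | add a b ha hb => simp [mul_add, ha, hb]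
    | tmul a b =>
      induction u using TensorProduct.induction_on with
      | zero => simp
      | add p q hp hq => simp only [tmul_add, add_mul, map_add, hp, hq]
      | tmul c d =>
        simp [CM_tmul, smul_mul_assoc, mul_smul_comm, smul_smul, mul_comm (W.ε (a*x))]
  have ht : W.εt x = epsL k B (W.ε ∘ₗ LinearMap.mulRight k x) (W.Δ 1) := by
    rw [εt_def, mini1]
  have hs : W.εs y = epsR k B (W.ε ∘ₗ LinearMap.mulLeft k y) (W.Δ 1) := by
    rw [εs_def, mini2]
  have d1 : leg12 k B (W.Δ 1) * ((1:B) ⊗ₜ[k] W.Δ 1) = ext12 k B W.Δ (W.Δ 1) := by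
    rw [W.delta_one₁]; rfl
  have d2 : ((1:B) ⊗ₜ[k] W.Δ 1) * leg12 k B (W.Δ 1) = ext12 k B W.Δ (W.Δ 1) := by
    rw [W.delta_one₂]; rfl
  rw [ht, hs, ← Ca, d1, ← d2, Cb]

/-- The sandwich map used in the proof of anti-multiplicativity. -/
noncomputable def AMD (W : WeakHopf k B) (c : B ⊗[k] B) :
    B ⊗[k] (B ⊗[k] B) →ₗ[k] B :=
  mul2 k B ∘ₗ
    TensorProduct.map (mul2 k B ∘ₗ TensorProduct.map W.S LinearMap.id ∘ₗ LinearMap.mulRight k c)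
      W.S ∘ₗ (TensorProduct.assoc k B B B).symm.toLinearMap

lemma AMD_tmul (c : B ⊗[k] B) (a b d : B) :
    AMD W c (a ⊗ₜ[k] (b ⊗ₜ[k] d))
      = mul2 k B (TensorProduct.map W.S LinearMap.id ((a ⊗ₜ[k] b) * c)) * W.S d := by
  simp [AMD]

lemma AMD_add (c c' : B ⊗[k] B) (U : B ⊗[k] (B ⊗[k] B)) :
    AMD W (c + c') U = AMD W c U + AMD W c' U := by
  induction U using TensorProduct.induction_on with
  | zero => simp
  | add p q hp hq => simp only [map_add, hp, hq]; abel
  | tmul a p =>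
    induction p using TensorProduct.induction_on with
    | zero => simp
    | add p q hp hq => simp only [tmul_add, map_add, hp, hq]; abel
    | tmul b d => simp [AMD_tmul, mul_add, add_mul]

lemma AMD_czero (U : B ⊗[k] (B ⊗[k] B)) : AMD W 0 U = 0 := by
  induction U using TensorProduct.induction_on with
  | zero => simp
  | add p q hp hq => simp only [map_add, hp, hq]; abel
  | tmul a p =>
    induction p using TensorProduct.induction_on with
    | zero => simp
    | add p q hp hq => simp only [tmul_add, map_add, hp, hq]; abel
    | tmul b d => simp [AMD_tmul]

lemma AMD_pair (a x : B) (c : B) (p : B ⊗[k] B) :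
    AMD W (x ⊗ₜ[k] c) (a ⊗ₜ[k] p)
      = W.S (a * x) * mul2 k B (TensorProduct.map LinearMap.id W.S (p * (c ⊗ₜ[k] 1))) := by
  induction p using TensorProduct.induction_on with
  | zero => simp
  | add p q hp hq => simp [tmul_add, add_mul, hp, hq, mul_add]
  | tmul b d => simp [AMD_tmul, mul_assoc]

lemma AM1 (u w : B ⊗[k] B) :
    mul2 k B (TensorProduct.map W.S W.εt (u * w))
      = AMD W (TensorProduct.map LinearMap.id W.εt w) (ext23 k B W.Δ u) := by
  induction w using TensorProduct.induction_on with
  | zero => simp [AMD_czero]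
  | add p q hp hq => simp only [mul_add, map_add, hp, hq, AMD_add]
  | tmul x y =>
    induction u using TensorProduct.induction_on with
    | zero => simp
    | add p q hp hq => simp only [add_mul, map_add, hp, hq]
    | tmul a b =>
      simp only [Algebra.TensorProduct.tmul_mul_tmul, TensorProduct.map_tmul, mul2_tmul,
        ext23_tmul, LinearMap.id_coe, id_eq, AMD_pair, lemJ]


lemma tld23 (w : B ⊗[k] B) :
    TensorProduct.map LinearMap.id (mul2 k B ∘ₗ TensorProduct.map LinearMap.id W.S)
        (ext23 k B W.Δ w) = TensorProduct.map LinearMap.id W.εt w := by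
  induction w using TensorProduct.induction_on with
  | zero => simp
  | add p q hp hq => simp only [map_add, hp, hq]
  | tmul x y => simp [eps_t_eq]

lemma tld_assoc (q : B ⊗[k] B) (c : B) :
    TensorProduct.map LinearMap.id (mul2 k B ∘ₗ TensorProduct.map LinearMap.id W.S)
        ((TensorProduct.assoc k B B B) (q ⊗ₜ[k] c)) = q * ((1:B) ⊗ₜ[k] W.S c) := by
  induction q using TensorProduct.induction_on with
  | zero => simp
  | add p r hp hr => simp [add_tmul, hp, hr, add_mul]
  | tmul a b => simp

lemma SLD2 (c : B ⊗[k] B) (p : B ⊗[k] B) (b : B) :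
    AMD W c ((TensorProduct.assoc k B B B) (p ⊗ₜ[k] b))
      = mul2 k B (TensorProduct.map W.S LinearMap.id (p * c)) * W.S b := by
  induction p using TensorProduct.induction_on with
  | zero => simp
  | add p q hp hq => simp only [add_tmul, map_add, hp, hq, add_mul]
  | tmul x y => simp [AMD_tmul]

lemma SLD3 (t : B ⊗[k] B) (z : B) :
    mul2 k B (TensorProduct.map W.S LinearMap.id (t * ((1:B) ⊗ₜ[k] z)))
      = mul2 k B (TensorProduct.map W.S LinearMap.id t) * z := by
  induction t using TensorProduct.induction_on with
  | zero => simp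
  | add p q hp hq => simp [add_mul, hp, hq]
  | tmul a b => simp [mul_assoc]

noncomputable def kapL (W : WeakHopf k B) (w : B ⊗[k] B) : B →ₗ[k] B :=
  mul2 k B ∘ₗ TensorProduct.map W.εs W.S ∘ₗ LinearMap.mulRight k w ∘ₗ (TensorProduct.mk k B B).flip 1

lemma kapL_apply (w : B ⊗[k] B) (a : B) :
    kapL W w a = mul2 k B (TensorProduct.map W.εs W.S ((a ⊗ₜ[k] 1) * w)) := rfl

lemma AM2 (u w : B ⊗[k] B) :
    AMD W (TensorProduct.map LinearMap.id (mul2 k B ∘ₗ TensorProduct.map LinearMap.id W.S)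
        (ext12 k B W.Δ w)) (ext12 k B W.Δ u)
      = mul2 k B (TensorProduct.map (kapL W w) W.S u) := by
  induction w using TensorProduct.induction_on with
  | zero =>
    have h0 : kapL W 0 = 0 := by
      apply LinearMap.ext; intro a; simp [kapL]
    simp [AMD_czero, h0]
  | add p q hp hq =>
    have hadd : kapL W (p + q) = kapL W p + kapL W q := by
      apply LinearMap.ext; intro a; simp [kapL_apply, mul_add]
    simp only [map_add, AMD_add, hp, hq, hadd, TensorProduct.map_add_left, LinearMap.add_apply]
  | tmul x y =>
    induction u using TensorProduct.induction_on with
    | zero => simp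
    | add p q hp hq => simp only [map_add, hp, hq]
    | tmul a b =>
      have e1 : ext12 k B W.Δ (x ⊗ₜ[k] y) = (TensorProduct.assoc k B B B) (W.Δ x ⊗ₜ[k] y) := rfl
      have e2 : ext12 k B W.Δ (a ⊗ₜ[k] b) = (TensorProduct.assoc k B B B) (W.Δ a ⊗ₜ[k] b) := rfl
      rw [e1, e2, tld_assoc, SLD2, ← mul_assoc, ← W.comul_mul, SLD3, eps_s_eq]
      simp [kapL_apply, mul_assoc, eps_s_eq]

noncomputable def jmap (W : WeakHopf k B) (a : B) : B →ₗ[k] B :=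
  mul2 k B ∘ₗ TensorProduct.map W.S LinearMap.id ∘ₗ
    LinearMap.mulLeft k ((1:B) ⊗ₜ[k] W.εs a) ∘ₗ W.Δ

noncomputable def Mmap (W : WeakHopf k B) (a : B) : B ⊗[k] (B ⊗[k] B) →ₗ[k] B :=
  mul2 k B ∘ₗ TensorProduct.map W.S
    (LinearMap.mulLeft k (W.εs a) ∘ₗ mul2 k B ∘ₗ TensorProduct.map LinearMap.id W.S)

lemma kap_core (h a : B) : kapL W (W.Δ h) a = W.S h * W.εs a := by
  have KC1 : ∀ t : B ⊗[k] B,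
      mul2 k B (TensorProduct.map W.εs W.S ((a ⊗ₜ[k] 1) * t))
        = mul2 k B (TensorProduct.map (W.εs ∘ₗ LinearMap.mulLeft k a) W.S t) := by
    intro t
    induction t using TensorProduct.induction_on with
    | zero => simp
    | add p q hp hq => simp [mul_add, hp, hq]
    | tmul x y => simp
  have KC2 : W.εs ∘ₗ LinearMap.mulLeft k a = jmap W a := by
    apply LinearMap.ext; intro z
    simp only [LinearMap.comp_apply, LinearMap.mulLeft_apply, jmap]
    exact (lemJ' W a z).symm
  have SLKC3 : ∀ (p : B ⊗[k] B) (c : B),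
      Mmap W a ((TensorProduct.assoc k B B B) (p ⊗ₜ[k] c))
        = mul2 k B (TensorProduct.map W.S LinearMap.id (((1:B) ⊗ₜ[k] W.εs a) * p)) * W.S c := by
    intro p c
    induction p using TensorProduct.induction_on with
    | zero => simp [Mmap]
    | add p q hp hq => simp only [add_tmul, map_add, hp, hq, mul_add, add_mul]
    | tmul z₁ z₂ => simp [Mmap, mul_assoc]
  have KC3 : ∀ t : B ⊗[k] B,
      mul2 k B (TensorProduct.map (jmap W a) W.S t) = Mmap W a (ext12 k B W.Δ t) := by
    intro t
    induction t using TensorProduct.induction_on with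
    | zero => simp
    | add p q hp hq => simp only [map_add, hp, hq]
    | tmul z c =>
      have e1 : ext12 k B W.Δ (z ⊗ₜ[k] c) = (TensorProduct.assoc k B B B) (W.Δ z ⊗ₜ[k] c) := rfl
      rw [e1, SLKC3]
      simp [jmap]
  have SLKC4 : ∀ (z : B) (q : B ⊗[k] B),
      Mmap W a (z ⊗ₜ[k] q)
        = W.S z * (W.εs a * mul2 k B (TensorProduct.map LinearMap.id W.S q)) := by
    intro z q
    induction q using TensorProduct.induction_on with
    | zero => simp [Mmap]
    | add p q hp hq => simp only [tmul_add, map_add, hp, hq, mul_add]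
    | tmul q₁ q₂ => simp [Mmap]
  have KC4 : ∀ t : B ⊗[k] B,
      Mmap W a (ext23 k B W.Δ t)
        = mul2 k B (TensorProduct.map W.S (LinearMap.mulRight k (W.εs a) ∘ₗ W.εt) t) := by
    intro t
    induction t using TensorProduct.induction_on with
    | zero => simp
    | add p q hp hq => simp only [map_add, hp, hq]
    | tmul z c =>
      rw [ext23_tmul, SLKC4, eps_t_eq]
      simp [lemCOMM]
  have KC6 : ∀ t : B ⊗[k] B,
      mul2 k B (TensorProduct.map W.S (LinearMap.mulRight k (W.εs a) ∘ₗ W.εt) t)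
        = mul2 k B (TensorProduct.map W.S W.εt t) * W.εs a := by
    intro t
    induction t using TensorProduct.induction_on with
    | zero => simp
    | add p q hp hq => simp [hp, hq, add_mul]
    | tmul z c => simp [mul_assoc]
  rw [kapL_apply, KC1, KC2, KC3, W.coassoc h, KC4, KC6, lemK]

theorem S_antimul (g h : B) : W.S (g * h) = W.S h * W.S g := by
  have C4f : ∀ (c : B) (u : B ⊗[k] B),
      mul2 k B (TensorProduct.map (LinearMap.mulLeft k c ∘ₗ W.εs) W.S u)
        = c * mul2 k B (TensorProduct.map W.εs W.S u) := by
    intro c u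
    induction u using TensorProduct.induction_on with
    | zero => simp
    | add p q hp hq => simp [hp, hq, mul_add]
    | tmul x y => simp [mul_assoc]
  have kc : kapL W (W.Δ h) = LinearMap.mulLeft k (W.S h) ∘ₗ W.εs := by
    apply LinearMap.ext; intro a
    simp only [LinearMap.comp_apply, LinearMap.mulLeft_apply]
    exact kap_core W h a
  calc W.S (g * h) = mul2 k B (TensorProduct.map W.S W.εt (W.Δ (g*h))) := (lemK W (g*h)).symm
    _ = mul2 k B (TensorProduct.map W.S W.εt (W.Δ g * W.Δ h)) := by rw [W.comul_mul]
    _ = AMD W (TensorProduct.map LinearMap.id W.εt (W.Δ h)) (ext23 k B W.Δ (W.Δ g)) := AM1 W _ _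
    _ = AMD W (TensorProduct.map LinearMap.id (mul2 k B ∘ₗ TensorProduct.map LinearMap.id W.S)
          (ext12 k B W.Δ (W.Δ h))) (ext12 k B W.Δ (W.Δ g)) := by
        rw [W.coassoc h, W.coassoc g, tld23]
    _ = mul2 k B (TensorProduct.map (kapL W (W.Δ h)) W.S (W.Δ g)) := AM2 W _ _
    _ = W.S h * W.S g := by rw [kc, C4f, lemL]

lemma lemSES (y : B) : W.εt (W.εs y) = W.S (W.εs y) := by
  rw [← eps_t_eq, N'_form, lemR]

lemma lemSET (y : B) : W.εs (W.εt y) = W.S (W.εt y) := by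
  rw [← eps_s_eq, N_form1, lemR']

noncomputable def etaBar (W : WeakHopf k B) (x : B) : B :=
  epsR k B (W.ε ∘ₗ LinearMap.mulRight k x) (W.Δ 1)

noncomputable def etaBar' (W : WeakHopf k B) (x : B) : B :=
  epsL k B (W.ε ∘ₗ LinearMap.mulLeft k x) (W.Δ 1)

lemma lemFW (a x : B) : W.ε (a * etaBar W x) = W.ε (a * x) := by
  have key : ∀ t : B ⊗[k] B,
      W.ε (a * epsR k B (W.ε ∘ₗ LinearMap.mulRight k x) t)
        = pairF k B (W.ε ∘ₗ LinearMap.mulLeft k a) (W.ε ∘ₗ LinearMap.mulRight k x) t := by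
    intro t
    induction t using TensorProduct.induction_on with
    | zero => simp
    | add p q hp hq => simp [map_add, mul_add, hp, hq]
    | tmul p q => simp [mul_smul_comm, mul_comm]
  have h1 := W.eps_weak₁ a 1 x
  rw [mul_one] at h1
  rw [etaBar, key (W.Δ 1), ← h1]

lemma lemFW' (x a : B) : W.ε (etaBar' W x * a) = W.ε (x * a) := by
  have key : ∀ t : B ⊗[k] B,
      W.ε (epsL k B (W.ε ∘ₗ LinearMap.mulLeft k x) t * a)
        = pairF k B (W.ε ∘ₗ LinearMap.mulLeft k x) (W.ε ∘ₗ LinearMap.mulRight k a) t := by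
    intro t
    induction t using TensorProduct.induction_on with
    | zero => simp
    | add p q hp hq => simp [map_add, add_mul, hp, hq]
    | tmul p q => simp [smul_mul_assoc]
  have h1 := W.eps_weak₁ x 1 a
  rw [mul_one] at h1
  rw [etaBar', key (W.Δ 1), ← h1]

lemma etaBar_fix (x : B) : W.εs (etaBar W x) = etaBar W x := by
  have key : ∀ t : B ⊗[k] B,
      W.εs (epsR k B (W.ε ∘ₗ LinearMap.mulRight k x) t)
        = epsR k B (W.ε ∘ₗ LinearMap.mulRight k x) (TensorProduct.map W.εs LinearMap.id t) := by
    intro t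
    induction t using TensorProduct.induction_on with
    | zero => simp
    | add p q hp hq => simp [map_add, hp, hq]
    | tmul p q => simp
  have hF : TensorProduct.map W.εs LinearMap.id (W.Δ 1) = W.Δ 1 := by
    rw [lemF']
    rw [show ((1:B) ⊗ₜ[k] (1:B)) = (1 : B ⊗[k] B) from rfl, one_mul]
  rw [etaBar, key (W.Δ 1), hF]

lemma etaBar'_fix (x : B) : W.εt (etaBar' W x) = etaBar' W x := by
  have key : ∀ t : B ⊗[k] B,
      W.εt (epsL k B (W.ε ∘ₗ LinearMap.mulLeft k x) t)
        = epsL k B (W.ε ∘ₗ LinearMap.mulLeft k x) (TensorProduct.map LinearMap.id W.εt t) := by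
    intro t
    induction t using TensorProduct.induction_on with
    | zero => simp
    | add p q hp hq => simp [map_add, hp, hq]
    | tmul p q => simp
  have hF : TensorProduct.map LinearMap.id W.εt (W.Δ 1) = W.Δ 1 := by
    rw [lemF]
    rw [show ((1:B) ⊗ₜ[k] (1:B)) = (1 : B ⊗[k] B) from rfl, mul_one]
  rw [etaBar', key (W.Δ 1), hF]

lemma lemFZ (x : B) : W.εt x = W.S (etaBar W x) := by
  have het : W.εt (etaBar W x) = W.εt x := by
    have key : ∀ t : B ⊗[k] B,
        epsL k B W.ε (t * (etaBar W x ⊗ₜ[k] 1)) = epsL k B W.ε (t * (x ⊗ₜ[k] 1)) := by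
      intro t
      induction t using TensorProduct.induction_on with
      | zero => simp
      | add p q hp hq => simp [add_mul, hp, hq]
      | tmul p q =>
        simp only [Algebra.TensorProduct.tmul_mul_tmul, mul_one, epsL_tmul, lemFW]
    rw [εt_def, εt_def, key (W.Δ 1)]
  rw [← het, ← etaBar_fix W x]
  exact lemSES W _

lemma lemFZ' (x : B) : W.εs x = W.S (etaBar' W x) := by
  have het : W.εs (etaBar' W x) = W.εs x := by
    have key : ∀ t : B ⊗[k] B,
        epsR k B W.ε (((1:B) ⊗ₜ[k] etaBar' W x) * t) = epsR k B W.ε (((1:B) ⊗ₜ[k] x) * t) := by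
      intro t
      induction t using TensorProduct.induction_on with
      | zero => simp
      | add p q hp hq => simp [mul_add, hp, hq]
      | tmul p q =>
        simp only [Algebra.TensorProduct.tmul_mul_tmul, one_mul, epsR_tmul, lemFW']
    rw [εs_def, εs_def, key (W.Δ 1)]
  rw [← het, ← etaBar'_fix W x]
  exact lemSET W _

section TwistProof
variable (T : Twist k B W)

noncomputable def NU (W : WeakHopf k B) : B ⊗[k] (B ⊗[k] B) →ₗ[k] B :=
  mul2 k B ∘ₗ TensorProduct.map LinearMap.id (mul2 k B ∘ₗ TensorProduct.map W.S LinearMap.id)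

lemma NU_tmul (a b c : B) : NU W (a ⊗ₜ[k] (b ⊗ₜ[k] c)) = a * (W.S b * c) := by simp [NU]

noncomputable def MU (W : WeakHopf k B) : B ⊗[k] (B ⊗[k] B) →ₗ[k] B :=
  mul2 k B ∘ₗ TensorProduct.map W.S (mul2 k B ∘ₗ TensorProduct.map LinearMap.id W.S)

lemma MU_tmul (a b c : B) : MU W (a ⊗ₜ[k] (b ⊗ₜ[k] c)) = W.S a * (b * W.S c) := by simp [MU]

lemma G1a (s t : B ⊗[k] B) :
    mul2 k B (TensorProduct.map LinearMap.id W.S s) * mul2 k B (TensorProduct.map W.S LinearMap.id t)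
      = NU W (leg23 k B t * leg12 k B s) := by
  induction s using TensorProduct.induction_on with
  | zero => simp
  | add p q hp hq => simp [map_add, add_mul, mul_add, hp, hq]
  | tmul a b =>
    induction t using TensorProduct.induction_on with
    | zero => simp
    | add p q H1 H2 =>
      simp only [map_add, mul_add, add_mul, tmul_add, add_tmul, leg23_apply, leg12_tmul,
        ext23_tmul, ext12_tmul, TensorProduct.map_tmul, mul2_tmul, LinearMap.id_coe, id_eq,
        TensorProduct.assoc_tmul, Algebra.TensorProduct.tmul_mul_tmul] at H1 H2 ⊢
      rw [H1, H2]
    | tmul x y =>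
      simp only [TensorProduct.map_tmul, mul2_tmul, LinearMap.id_coe, id_eq, leg23_apply,
        leg12_tmul, Algebra.TensorProduct.tmul_mul_tmul, one_mul, mul_one, NU_tmul,
        S_antimul]
      simp [mul_assoc]

lemma G1c (s t : B ⊗[k] B) :
    NU W (ext23 k B W.Δ s * ext12 k B W.Δ t)
      = mul2 k B (TensorProduct.map LinearMap.id W.εs s)
          * mul2 k B (TensorProduct.map W.εt LinearMap.id t) := by
  have SL1 : ∀ (p q : B ⊗[k] B) (a y : B),
      NU W ((a ⊗ₜ[k] q) * (TensorProduct.assoc k B B B) (p ⊗ₜ[k] y))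
        = a * (mul2 k B (TensorProduct.map LinearMap.id W.S p)
            * (mul2 k B (TensorProduct.map W.S LinearMap.id q) * y)) := by
    intro p q a y
    induction p using TensorProduct.induction_on with
    | zero => simp
    | add p₁ p₂ h₁ h₂ => simp [add_tmul, map_add, mul_add, add_mul, h₁, h₂]
    | tmul p₁ p₂ =>
      induction q using TensorProduct.induction_on with
      | zero => simp
      | add q₁ q₂ H1 H2 =>
        simp only [map_add, mul_add, add_mul, tmul_add, add_tmul, leg23_apply, leg12_tmul,
        ext23_tmul, ext12_tmul, TensorProduct.map_tmul, mul2_tmul, LinearMap.id_coe, id_eq,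
        TensorProduct.assoc_tmul, Algebra.TensorProduct.tmul_mul_tmul] at H1 H2 ⊢
        rw [H1, H2]
      | tmul q₁ q₂ =>
        simp only [TensorProduct.assoc_tmul, Algebra.TensorProduct.tmul_mul_tmul, NU_tmul,
          TensorProduct.map_tmul, mul2_tmul, LinearMap.id_coe, id_eq, S_antimul]
        simp [mul_assoc]
  induction s using TensorProduct.induction_on with
  | zero => simp
  | add p q hp hq => simp [map_add, add_mul, hp, hq]
  | tmul a b =>
    induction t using TensorProduct.induction_on with
    | zero => simp
    | add p q H1 H2 =>
      simp only [map_add, mul_add, add_mul, tmul_add, add_tmul, leg23_apply, leg12_tmul,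
        ext23_tmul, ext12_tmul, TensorProduct.map_tmul, mul2_tmul, LinearMap.id_coe, id_eq,
        TensorProduct.assoc_tmul, Algebra.TensorProduct.tmul_mul_tmul] at H1 H2 ⊢
      rw [H1, H2]
    | tmul x y =>
      have e2 : ext12 k B W.Δ (x ⊗ₜ[k] y) = (TensorProduct.assoc k B B B) (W.Δ x ⊗ₜ[k] y) := rfl
      rw [ext23_tmul, e2, SL1, eps_t_eq, eps_s_eq]
      simp only [TensorProduct.map_tmul, mul2_tmul, LinearMap.id_coe, id_eq]
      rw [← mul_assoc (W.εt x), lemCOMM, mul_assoc, ← mul_assoc]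

lemma p0 (t : B ⊗[k] B) :
    mul2 k B (TensorProduct.map LinearMap.id W.εs t) = epsR k B W.ε (t * W.Δ 1) := by
  have SL : ∀ (x y : B) (u : B ⊗[k] B),
      epsR k B W.ε ((x ⊗ₜ[k] y) * u) = x * epsR k B (W.ε ∘ₗ LinearMap.mulLeft k y) u := by
    intro x y u
    induction u using TensorProduct.induction_on with
    | zero => simp
    | add p q hp hq => simp [mul_add, hp, hq]
    | tmul c d => simp [mul_smul_comm]
  induction t using TensorProduct.induction_on with
  | zero => simp
  | add p q hp hq => simp [map_add, add_mul, hp, hq]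
  | tmul x y =>
    rw [SL]
    simp only [TensorProduct.map_tmul, mul2_tmul, LinearMap.id_coe, id_eq]
    rw [εs_def, mini2]

lemma q0 (t : B ⊗[k] B) :
    mul2 k B (TensorProduct.map W.εt LinearMap.id t) = epsL k B W.ε (W.Δ 1 * t) := by
  have SL : ∀ (x y : B) (u : B ⊗[k] B),
      epsL k B W.ε (u * (x ⊗ₜ[k] y)) = epsL k B (W.ε ∘ₗ LinearMap.mulRight k x) u * y := by
    intro x y u
    induction u using TensorProduct.induction_on with
    | zero => simp
    | add p q hp hq => simp [add_mul, hp, hq]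
    | tmul c d => simp [smul_mul_assoc]
  induction t using TensorProduct.induction_on with
  | zero => simp
  | add p q hp hq => simp [map_add, mul_add, hp, hq]
  | tmul x y =>
    rw [SL]
    simp only [TensorProduct.map_tmul, mul2_tmul, LinearMap.id_coe, id_eq]
    rw [εt_def, mini1]

theorem goal1 :
    mul2 k B (TensorProduct.map LinearMap.id W.S T.Θbar)
        * mul2 k B (TensorProduct.map W.S LinearMap.id T.Θ) = 1 := by
  rw [G1a, ← T.cocycle₄, G1c, p0, q0, ← T.idem_right, ← T.idem_left, T.counit₄, T.counit₁,
    one_mul]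

lemma G2a (t s : B ⊗[k] B) :
    mul2 k B (TensorProduct.map W.S LinearMap.id t) * mul2 k B (TensorProduct.map LinearMap.id W.S s)
      = MU W (leg12 k B t * leg23 k B s) := by
  induction s using TensorProduct.induction_on with
  | zero => simp
  | add p q hp hq => simp [map_add, tmul_add, add_mul, mul_add, hp, hq]
  | tmul a b =>
    induction t using TensorProduct.induction_on with
    | zero => simp
    | add p q H1 H2 =>
      simp only [map_add, mul_add, add_mul, tmul_add, add_tmul, leg23_apply, leg12_tmul,
        ext23_tmul, ext12_tmul, TensorProduct.map_tmul, mul2_tmul, LinearMap.id_coe, id_eq,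
        TensorProduct.assoc_tmul, Algebra.TensorProduct.tmul_mul_tmul] at H1 H2 ⊢
      rw [H1, H2]
    | tmul x y =>
      simp only [TensorProduct.map_tmul, mul2_tmul, LinearMap.id_coe, id_eq, leg23_apply,
        leg12_tmul, Algebra.TensorProduct.tmul_mul_tmul, one_mul, mul_one, MU_tmul]
      simp [mul_assoc]

lemma G2c (s t : B ⊗[k] B) :
    MU W (ext12 k B W.Δ s * ext23 k B W.Δ t)
      = mul2 k B (TensorProduct.map W.S W.εt t) * mul2 k B (TensorProduct.map W.εs W.S s) := by
  have SL2 : ∀ (p q : B ⊗[k] B) (b x : B),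
      MU W ((TensorProduct.assoc k B B B) (p ⊗ₜ[k] b) * (x ⊗ₜ[k] q))
        = W.S x * (mul2 k B (TensorProduct.map W.S LinearMap.id p)
            * (mul2 k B (TensorProduct.map LinearMap.id W.S q) * W.S b)) := by
    intro p q b x
    induction p using TensorProduct.induction_on with
    | zero => simp
    | add p₁ p₂ h₁ h₂ => simp [add_tmul, map_add, mul_add, add_mul, h₁, h₂]
    | tmul p₁ p₂ =>
      induction q using TensorProduct.induction_on with
      | zero => simp
      | add q₁ q₂ H1 H2 =>
        simp only [map_add, mul_add, add_mul, tmul_add, add_tmul, leg23_apply, leg12_tmul,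
        ext23_tmul, ext12_tmul, TensorProduct.map_tmul, mul2_tmul, LinearMap.id_coe, id_eq,
        TensorProduct.assoc_tmul, Algebra.TensorProduct.tmul_mul_tmul] at H1 H2 ⊢
        rw [H1, H2]
      | tmul q₁ q₂ =>
        simp only [TensorProduct.assoc_tmul, Algebra.TensorProduct.tmul_mul_tmul, MU_tmul,
          TensorProduct.map_tmul, mul2_tmul, LinearMap.id_coe, id_eq, S_antimul]
        simp [mul_assoc]
  induction s using TensorProduct.induction_on with
  | zero => simp
  | add p q hp hq => simp [map_add, add_mul, mul_add, hp, hq]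
  | tmul a b =>
    induction t using TensorProduct.induction_on with
    | zero => simp
    | add p q H1 H2 =>
      simp only [map_add, mul_add, add_mul, tmul_add, add_tmul, leg23_apply, leg12_tmul,
        ext23_tmul, ext12_tmul, TensorProduct.map_tmul, mul2_tmul, LinearMap.id_coe, id_eq,
        TensorProduct.assoc_tmul, Algebra.TensorProduct.tmul_mul_tmul] at H1 H2 ⊢
      rw [H1, H2]
    | tmul x y =>
      have e2 : ext12 k B W.Δ (a ⊗ₜ[k] b) = (TensorProduct.assoc k B B B) (W.Δ a ⊗ₜ[k] b) := rfl
      rw [ext23_tmul, e2, SL2, eps_s_eq, eps_t_eq]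
      simp only [TensorProduct.map_tmul, mul2_tmul, LinearMap.id_coe, id_eq]
      rw [← mul_assoc (W.εs a), ← lemCOMM, mul_assoc, ← mul_assoc]

lemma Q2 (t : B ⊗[k] B) :
    mul2 k B (TensorProduct.map W.S W.εt t) = W.S (epsR k B W.ε (W.Δ 1 * t)) := by
  have SL : ∀ (x y : B) (u : B ⊗[k] B),
      epsR k B W.ε (u * (x ⊗ₜ[k] y)) = epsR k B (W.ε ∘ₗ LinearMap.mulRight k y) u * x := by
    intro x y u
    induction u using TensorProduct.induction_on with
    | zero => simp
    | add p q hp hq => simp [add_mul, hp, hq]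
    | tmul c d => simp [smul_mul_assoc]
  induction t using TensorProduct.induction_on with
  | zero => simp
  | add p q hp hq => simp [map_add, mul_add, hp, hq]
  | tmul x y =>
    rw [SL]
    simp only [TensorProduct.map_tmul, mul2_tmul]
    rw [lemFZ, ← S_antimul, etaBar]

lemma Q2' (t : B ⊗[k] B) :
    mul2 k B (TensorProduct.map W.εs W.S t) = W.S (epsL k B W.ε (t * W.Δ 1)) := by
  have SL : ∀ (x y : B) (u : B ⊗[k] B),
      epsL k B W.ε ((x ⊗ₜ[k] y) * u) = y * epsL k B (W.ε ∘ₗ LinearMap.mulLeft k x) u := by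
    intro x y u
    induction u using TensorProduct.induction_on with
    | zero => simp
    | add p q hp hq => simp [mul_add, hp, hq]
    | tmul c d => simp [mul_smul_comm]
  induction t using TensorProduct.induction_on with
  | zero => simp
  | add p q hp hq => simp [map_add, add_mul, hp, hq]
  | tmul a b =>
    rw [SL]
    simp only [TensorProduct.map_tmul, mul2_tmul]
    rw [lemFZ', ← S_antimul, etaBar']

theorem goal2 :
    mul2 k B (TensorProduct.map W.S LinearMap.id T.Θ)
        * mul2 k B (TensorProduct.map LinearMap.id W.S T.Θbar) = 1 := by
  rw [G2a, ← T.cocycle₃, G2c, Q2, Q2', ← T.idem_left, ← T.idem_right, T.counit₂, T.counit₃,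
    S_one, one_mul]

end TwistProof

end Dev
end WHA

/-- for a twist `(Θ, Θ̄)` of a weak Hopf algebra, `v = S(Θ⁽¹⁾)Θ⁽²⁾` is
invertible with inverse `Θ̄⁽¹⁾S(Θ̄⁽²⁾)`. -/
theorem twist_v_invertible
    (k B : Type*) [Field k] [Ring B] [Algebra k B]
    (W : WHA.WeakHopf k B) (T : WHA.Twist k B W) :
    WHA.mul2 k B (TensorProduct.map LinearMap.id W.S T.Θbar) *
        WHA.mul2 k B (TensorProduct.map W.S LinearMap.id T.Θ) = 1 ∧
      WHA.mul2 k B (TensorProduct.map W.S LinearMap.id T.Θ) *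
        WHA.mul2 k B (TensorProduct.map LinearMap.id W.S T.Θbar) = 1 := by
  exact ⟨WHA.goal1 W T, WHA.goal2 W T⟩
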